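/- Let E ⊆ ℝ^n be a Lebesgue-measurable set and let f : E → ℝ^m be a measurable mapping such that ap limsup_{x→g} |f(x) − f(g)|/|x − g| < ∞ for almost every point g ∈ E. Then f is approximately differentiable at almost every point of E. -/

import Mathlib

open MeasureTheory Metric Filter Set Function
open scoped Topology ENNReal NNReal

/-- `Y` has density `d` at the point `x` with respect to the measure `μ`. -/
def HasDensityAt {X : Type*} [PseudoMetricSpace X] [MeasurableSpace X]
    (μ : Measure X) (Y : Set X) (x : X) (d : ℝ≥0∞) : Prop :=
  Tendsto (fun r : ℝ => μ (Y ∩ ball x r) / μ (ball x r)) (𝓝[>] (0 : ℝ)) (𝓝 d)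

/-- `L` is an approximate differential of `f` (as a map defined on `E`) at `a`. -/
def IsApproxDifferential {n m : ℕ} (E : Set (EuclideanSpace ℝ (Fin n)))
    (f : EuclideanSpace ℝ (Fin n) → EuclideanSpace ℝ (Fin m))
    (a : EuclideanSpace ℝ (Fin n))
    (L : EuclideanSpace ℝ (Fin n) →ₗ[ℝ] EuclideanSpace ℝ (Fin m)) : Prop :=
  ∀ ε : ℝ, 0 < ε →
    HasDensityAt volume {x ∈ E | ε * ‖x - a‖ < ‖f x - f a - L (x - a)‖} a 0

namespace ApproxAux

noncomputable section

abbrev Euc (n : ℕ) := EuclideanSpace ℝ (Fin n)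

variable {n m : ℕ}

lemma sphere_null (a : Euc n) {r : ℝ} (hr : 0 < r) : volume (sphere a r) = 0 := by
  rcases subsingleton_or_nontrivial (Euc n) with h | h
  · have : sphere a r = ∅ := by
      ext y
      simp only [mem_sphere, mem_empty_iff_false, iff_false]
      intro hy
      rw [Subsingleton.elim y a, dist_self] at hy
      exact hr.ne hy
    simp [this]
  · exact Measure.addHaar_sphere volume a r

lemma inter_closedBall_eq (P : Set (Euc n)) (a : Euc n) {r : ℝ} (hr : 0 < r) :
    volume (P ∩ closedBall a r) = volume (P ∩ ball a r) := by
  refine le_antisymm ?_ (measure_mono (inter_subset_inter_right _ ball_subset_closedBall))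
  calc volume (P ∩ closedBall a r) ≤ volume ((P ∩ ball a r) ∪ sphere a r) := by
        refine measure_mono fun x hx => ?_
        rcases lt_or_eq_of_le (mem_closedBall.1 hx.2) with h | h
        · exact Or.inl ⟨hx.1, mem_ball.2 h⟩
        · exact Or.inr h
    _ ≤ volume (P ∩ ball a r) + volume (sphere a r) := measure_union_le _ _
    _ = volume (P ∩ ball a r) := by rw [sphere_null a hr, add_zero]

lemma ball_closedBall_eq (a : Euc n) {r : ℝ} (hr : 0 < r) :
    volume (closedBall a r) = volume (ball a r) := by
  simpa using inter_closedBall_eq (univ : Set (Euc n)) a hr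

/-- If `P` has density one at `a` (closed balls) and the measurable set `S` is disjoint from
`P` near `a`, then `S` has density zero at `a` (open balls). -/
lemma density_zero_of_disjoint {P S : Set (Euc n)} {a : Euc n} (hS : MeasurableSet S)
    (hP : Tendsto (fun r : ℝ => volume (P ∩ closedBall a r) / volume (closedBall a r))
      (𝓝[>] (0:ℝ)) (𝓝 1))
    {δ : ℝ} (hδ : 0 < δ) (hdisj : ∀ x ∈ S, x ∈ ball a δ → x ∉ P) :
    Tendsto (fun r : ℝ => volume (S ∩ ball a r) / volume (ball a r)) (𝓝[>] (0:ℝ)) (𝓝 0) := by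
  have hup : Tendsto (fun r : ℝ =>
      1 - volume (P ∩ closedBall a r) / volume (closedBall a r)) (𝓝[>] (0:ℝ)) (𝓝 0) := by
    have := ENNReal.Tendsto.sub (tendsto_const_nhds (x := (1:ℝ≥0∞))) hP (Or.inl ENNReal.one_ne_top)
    simpa using this
  refine tendsto_of_tendsto_of_tendsto_of_le_of_le' tendsto_const_nhds hup
    (Eventually.of_forall fun r => zero_le) ?_
  filter_upwards [Ioo_mem_nhdsGT_of_mem ⟨le_refl (0:ℝ), hδ⟩] with r hr
  obtain ⟨hr0, hrδ⟩ := hr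
  have hb0 : volume (ball a r) ≠ 0 := (measure_ball_pos volume a hr0).ne'
  have hbt : volume (ball a r) ≠ ∞ := measure_ball_lt_top.ne
  have hsub : P ∩ ball a r ⊆ ball a r \ S := fun x hx =>
    ⟨hx.2, fun hxS => hdisj x hxS (ball_subset_ball hrδ.le hx.2) hx.1⟩
  have hadd : volume (ball a r ∩ S) + volume (ball a r \ S) = volume (ball a r) :=
    measure_inter_add_diff _ hS
  have hle : volume (S ∩ ball a r) + volume (P ∩ ball a r) ≤ volume (ball a r) := by
    calc volume (S ∩ ball a r) + volume (P ∩ ball a r)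
        ≤ volume (ball a r ∩ S) + volume (ball a r \ S) := by
          rw [inter_comm S (ball a r)]
          exact add_le_add le_rfl (measure_mono hsub)
      _ = volume (ball a r) := hadd
  have h1 : volume (S ∩ ball a r) ≤ volume (ball a r) - volume (P ∩ ball a r) :=
    ENNReal.le_sub_of_add_le_right (ne_top_of_le_ne_top hbt (measure_mono inter_subset_right)) hle
  have key : (volume (ball a r) - volume (P ∩ ball a r)) / volume (ball a r)
      = 1 - volume (P ∩ ball a r) / volume (ball a r) := by
    rw [ENNReal.sub_div fun _ _ => hb0, ENNReal.div_self hb0 hbt]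
  calc volume (S ∩ ball a r) / volume (ball a r)
      ≤ (volume (ball a r) - volume (P ∩ ball a r)) / volume (ball a r) :=
        ENNReal.div_le_div_right h1 _
    _ = 1 - volume (P ∩ ball a r) / volume (ball a r) := key
    _ = 1 - volume (P ∩ closedBall a r) / volume (closedBall a r) := by
        rw [inter_closedBall_eq P a hr0, ball_closedBall_eq a hr0]

lemma ae_imp_of_restrict {μ : Measure (Euc n)} {P : Set (Euc n)} {Q : Euc n → Prop}
    (h : ∀ᵐ a ∂μ.restrict P, Q a) : ∀ᵐ a ∂μ, a ∈ P → Q a := by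
  rw [ae_iff] at h ⊢
  have hT := measure_toMeasurable (μ := μ.restrict P) {a | ¬ Q a}
  have hTm : MeasurableSet (toMeasurable (μ.restrict P) {a | ¬ Q a}) :=
    measurableSet_toMeasurable _ _
  have h0 : μ (toMeasurable (μ.restrict P) {a | ¬ Q a} ∩ P) = 0 := by
    rw [← Measure.restrict_apply hTm, hT, h]
  refine measure_mono_null ?_ h0
  intro a ha
  rw [mem_setOf_eq, Classical.not_imp] at ha
  exact ⟨subset_toMeasurable _ _ ha.2, ha.1⟩


/-- The set of "good" points: points of `E` at which, at all scales below `1/(j+1)`, both the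
`k`-dilatation-bad set and the complement of `E` occupy at most a fraction `(4·2ⁿ)⁻¹` of balls. -/
def Gset (E : Set (Euc n)) (f : Euc n → Euc m) (k j : ℕ) : Set (Euc n) :=
  {g | g ∈ E ∧ ∀ r : ℝ, 0 < r → r < 1/(j+1) →
    volume ({x ∈ E | (k:ℝ) < ‖f x - f g‖ / ‖x - g‖} ∩ ball g r)
        ≤ (4 * 2^n : ℝ≥0∞)⁻¹ * volume (ball g r)
    ∧ volume (ball g r \ E) ≤ (4 * 2^n : ℝ≥0∞)⁻¹ * volume (ball g r)}

lemma lipschitz_on_piece (E : Set (Euc n)) (f : Euc n → Euc m) (k j : ℕ) (q : Euc n) :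
    LipschitzOnWith (3*k : ℝ≥0) f (Gset E f k j ∩ ball q (1/(4*(j+1)))) := by
  apply LipschitzOnWith.of_dist_le_mul
  intro x hx y hy
  rcases eq_or_ne x y with rfl | hxy
  · simp
  haveI : Nontrivial (Euc n) := ⟨⟨x, y, hxy⟩⟩
  set d := dist x y with hd
  have hd0 : 0 < d := dist_pos.2 hxy
  have hj1 : (0:ℝ) < (j:ℝ) + 1 := by positivity
  have hdq : d < 2 * (1/(4*(j+1))) := by
    calc d ≤ dist x q + dist y q := dist_triangle_right x y q
      _ < 1/(4*(j+1)) + 1/(4*(j+1)) := add_lt_add (mem_ball.1 hx.2) (mem_ball.1 hy.2)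
      _ = 2 * (1/(4*(j+1))) := by ring
  have hdj : 2*d < 1/(j+1) := by
    rw [show (1:ℝ)/(j+1) = 4 * (1/(4*(j+1))) by field_simp]
    linarith
  obtain ⟨hxE, hxcond⟩ := hx.1
  obtain ⟨hyE, hycond⟩ := hy.1
  have hcx := hxcond (2*d) (by linarith) hdj
  have hcy := hycond d hd0 (by linarith)
  have hBsub : ball y d ⊆ ball x (2*d) := fun z hz => by
    rw [mem_ball] at hz ⊢
    calc dist z x ≤ dist z y + dist y x := dist_triangle z y x
      _ < d + d := add_lt_add_of_lt_of_le hz (by rw [dist_comm])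
      _ = 2*d := by ring
  set Bx : Set (Euc n) := {x' ∈ E | (k:ℝ) < ‖f x' - f x‖ / ‖x' - x‖} with hBx
  set By : Set (Euc n) := {x' ∈ E | (k:ℝ) < ‖f x' - f y‖ / ‖x' - y‖} with hBy
  have hgood : ((ball y d ∩ E) \ (Bx ∪ By)).Nonempty := by
    by_contra hemp
    rw [not_nonempty_iff_eq_empty] at hemp
    have hcover : ball y d ⊆ (ball x (2*d) \ E) ∪ (Bx ∩ ball x (2*d)) ∪ (By ∩ ball y d) := by
      intro z hz
      by_cases hzE : z ∈ E
      · by_cases hzx : z ∈ Bx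
        · exact Or.inl (Or.inr ⟨hzx, hBsub hz⟩)
        · by_cases hzy : z ∈ By
          · exact Or.inr ⟨hzy, hz⟩
          · have : z ∈ (ball y d ∩ E) \ (Bx ∪ By) := ⟨⟨hz, hzE⟩, by simp [hzx, hzy]⟩
            rw [hemp] at this
            exact this.elim
      · exact Or.inl (Or.inl ⟨hBsub hz, hzE⟩)
    have hscale : volume (ball x (2*d)) = 2^n * volume (ball y d) := by
      rw [Measure.addHaar_ball volume x (by linarith : (0:ℝ) ≤ 2*d),
        Measure.addHaar_ball volume y hd0.le, finrank_euclideanSpace_fin, mul_pow,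
        ENNReal.ofReal_mul (by positivity), ← mul_assoc]
      congr 1
      rw [ENNReal.ofReal_pow (by norm_num : (0:ℝ) ≤ 2)]
      norm_num
    set ε : ℝ≥0∞ := (4 * 2^n : ℝ≥0∞)⁻¹ with hε
    have h2n0 : (2:ℝ≥0∞)^n ≠ 0 := pow_ne_zero n (by norm_num)
    have h2nt : (2:ℝ≥0∞)^n ≠ ∞ := ENNReal.pow_ne_top (by norm_num)
    have hb0 : volume (ball y d) ≠ 0 := (measure_ball_pos volume y hd0).ne'
    have hbt : volume (ball y d) ≠ ∞ := measure_ball_lt_top.ne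
    have hμ : volume (ball y d) ≤ ε * volume (ball x (2*d)) + ε * volume (ball x (2*d))
        + ε * volume (ball y d) := by
      calc volume (ball y d)
          ≤ volume ((ball x (2*d) \ E) ∪ (Bx ∩ ball x (2*d)) ∪ (By ∩ ball y d)) :=
            measure_mono hcover
        _ ≤ volume ((ball x (2*d) \ E) ∪ (Bx ∩ ball x (2*d))) + volume (By ∩ ball y d) :=
            measure_union_le _ _
        _ ≤ volume (ball x (2*d) \ E) + volume (Bx ∩ ball x (2*d)) + volume (By ∩ ball y d) :=
            add_le_add (measure_union_le _ _) le_rfl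
        _ ≤ ε * volume (ball x (2*d)) + ε * volume (ball x (2*d)) + ε * volume (ball y d) :=
            add_le_add (add_le_add hcx.2 hcx.1) hcy.1
    rw [hscale] at hμ
    have hε4 : ε * 2^n = 4⁻¹ := by
      rw [hε, ENNReal.mul_inv (Or.inl (by norm_num)) (Or.inl (by norm_num)), mul_assoc,
        ENNReal.inv_mul_cancel h2n0 h2nt, mul_one]
    have hεle : ε ≤ 4⁻¹ := by
      rw [hε]
      exact ENNReal.inv_le_inv.2 (le_mul_of_one_le_right zero_le
        (one_le_pow_of_one_le' (by norm_num : (1:ℝ≥0∞) ≤ 2) n))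
    have hμ2 : volume (ball y d) ≤ (3 * 4⁻¹) * volume (ball y d) := by
      calc volume (ball y d) ≤ ε * (2^n * volume (ball y d)) + ε * (2^n * volume (ball y d))
            + ε * volume (ball y d) := hμ
        _ = (ε * 2^n) * volume (ball y d) + (ε * 2^n) * volume (ball y d)
            + ε * volume (ball y d) := by ring
        _ ≤ 4⁻¹ * volume (ball y d) + 4⁻¹ * volume (ball y d) + 4⁻¹ * volume (ball y d) := by
            rw [hε4]
            exact add_le_add le_rfl (mul_le_mul_left hεle _)
        _ = (3 * 4⁻¹) * volume (ball y d) := by ring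
    have h34 : (3:ℝ≥0∞) * 4⁻¹ < 1 := by
      rw [← div_eq_mul_inv]
      rw [ENNReal.div_lt_iff (Or.inl (by norm_num)) (Or.inl (by norm_num))]
      norm_num
    have := ENNReal.mul_lt_mul_left hb0 hbt h34
    rw [one_mul] at this
    exact absurd (hμ2.trans_lt this) (lt_irrefl _)
  obtain ⟨z, ⟨⟨hzB, hzE⟩, hzbad⟩⟩ := hgood
  have hkey : ∀ w : Euc n, z ∉ {x' ∈ E | (k:ℝ) < ‖f x' - f w‖ / ‖x' - w‖} →
      ‖f z - f w‖ ≤ k * ‖z - w‖ := by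
    intro w hw
    rcases eq_or_ne z w with rfl | hzw
    · simp
    have hrat : ‖f z - f w‖ / ‖z - w‖ ≤ k := not_lt.1 fun h => hw ⟨hzE, h⟩
    have hpos : (0:ℝ) < ‖z - w‖ := norm_pos_iff.2 (sub_ne_zero.2 hzw)
    calc ‖f z - f w‖ = (‖f z - f w‖ / ‖z - w‖) * ‖z - w‖ := by field_simp
      _ ≤ k * ‖z - w‖ := mul_le_mul_of_nonneg_right hrat hpos.le
  have hzx : ‖f z - f x‖ ≤ k * ‖z - x‖ := hkey x fun h => hzbad (Or.inl h)
  have hzy : ‖f z - f y‖ ≤ k * ‖z - y‖ := hkey y fun h => hzbad (Or.inr h)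
  have hdzx : dist z x < 2*d := mem_ball.1 (hBsub hzB)
  have hdzy : dist z y < d := mem_ball.1 hzB
  have hk0 : (0:ℝ) ≤ k := Nat.cast_nonneg k
  calc dist (f x) (f y) ≤ dist (f x) (f z) + dist (f z) (f y) := dist_triangle _ _ _
    _ = ‖f z - f x‖ + ‖f z - f y‖ := by rw [dist_comm (f x) (f z), dist_eq_norm, dist_eq_norm]
    _ ≤ k * ‖z - x‖ + k * ‖z - y‖ := add_le_add hzx hzy
    _ = k * dist z x + k * dist z y := by rw [dist_eq_norm, dist_eq_norm]
    _ ≤ k * (2*d) + k * d := add_le_add (mul_le_mul_of_nonneg_left hdzx.le hk0)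
        (mul_le_mul_of_nonneg_left hdzy.le hk0)
    _ = (3*k : ℝ≥0) * dist x y := by push_cast; ring


lemma exists_extension (f : Euc n → Euc m) (C : ℝ≥0) (P : Set (Euc n))
    (hf : LipschitzOnWith C f P) :
    ∃ F : Euc n → Euc m, EqOn f F P ∧ ∀ᵐ a ∂(volume : Measure (Euc n)),
      DifferentiableAt ℝ F a := by
  have h1 : LipschitzOnWith (1*C) (fun x => (WithLp.equiv 2 (Fin m → ℝ)) (f x)) P :=
    (PiLp.lipschitzWith_ofLp 2 _).comp_lipschitzOnWith hf
  obtain ⟨g, hg, hgeq⟩ := h1.extend_pi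
  refine ⟨fun x => (WithLp.equiv 2 (Fin m → ℝ)).symm (g x), fun x hx => ?_, ?_⟩
  · simp [← hgeq hx]
  · have hsymm : LipschitzWith _ (WithLp.equiv 2 (Fin m → ℝ)).symm :=
      PiLp.lipschitzWith_toLp 2 (fun _ : Fin m => ℝ)
    exact (hsymm.comp hg).ae_differentiableAt


lemma measurable_D {E : Set (Euc n)} (hE : MeasurableSet E) {f : Euc n → Euc m}
    (hf : Measurable (fun x : E => f x)) (g : Euc n → Euc m) (hg : Continuous g) (ε : ℝ)
    (a : Euc n) : MeasurableSet {x ∈ E | ε * ‖x - a‖ < ‖f x - g x‖} := by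
  have h1 : Measurable (fun x : E => ε * ‖(x : Euc n) - a‖) :=
    ((measurable_subtype_coe.sub measurable_const).norm).const_mul ε
  have h2 : Measurable (fun x : E => ‖f x - g x‖) :=
    (hf.sub (hg.measurable.comp measurable_subtype_coe)).norm
  have h3 : MeasurableSet {x : E | ε * ‖(x : Euc n) - a‖ < ‖f ↑x - g ↑x‖} :=
    measurableSet_lt h1 h2
  have h4 : {x ∈ E | ε * ‖x - a‖ < ‖f x - g x‖}
      = Subtype.val '' {x : E | ε * ‖(x : Euc n) - a‖ < ‖f ↑x - g ↑x‖} := by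
    ext y
    constructor
    · rintro ⟨hyE, hy⟩
      exact ⟨⟨y, hyE⟩, hy, rfl⟩
    · rintro ⟨⟨y', hy'⟩, hmem, rfl⟩
      exact ⟨hy', hmem⟩
  rw [h4]
  exact hE.subtype_image h3

end

end ApproxAux

open ApproxAux

/-- A measurable mapping whose approximate upper dilatation is finite at almost every
point of `E` is approximately differentiable almost everywhere in `E`. -/
theorem approx_differentiable_of_ap_limsup_lt_top {n m : ℕ}
    (E : Set (EuclideanSpace ℝ (Fin n))) (hE : MeasurableSet E)
    (f : EuclideanSpace ℝ (Fin n) → EuclideanSpace ℝ (Fin m))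
    (hf : Measurable (fun x : E => f x))
    (hap : ∀ᵐ g ∂volume, g ∈ E → ∃ s : ℝ,
      HasDensityAt volume {x ∈ E | s < ‖f x - f g‖ / ‖x - g‖} g 0) :
    ∀ᵐ a ∂volume, a ∈ E →
      ∃ L : EuclideanSpace ℝ (Fin n) →ₗ[ℝ] EuclideanSpace ℝ (Fin m),
        IsApproxDifferential E f a L := by
  classical
  obtain ⟨c, hccount, hcdense⟩ := TopologicalSpace.exists_countable_dense (Euc n)
  -- almost every point of `E` has `E`-density one
  have hEdens : ∀ᵐ g ∂(volume : Measure (Euc n)), g ∈ E →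
      Tendsto (fun r : ℝ => volume (E ∩ closedBall g r) / volume (closedBall g r))
        (𝓝[>] (0:ℝ)) (𝓝 1) :=
    ae_imp_of_restrict (Besicovitch.ae_tendsto_measure_inter_div volume E)
  -- covering claim: a.e. point of `E` lies in one of the pieces
  have hcov : ∀ᵐ g ∂(volume : Measure (Euc n)), g ∈ E → ∃ k j : ℕ, ∃ q ∈ c,
      g ∈ Gset E f k j ∩ ball q (1/(4*(j+1))) := by
    filter_upwards [hap, hEdens] with g hg hgd hgE
    obtain ⟨s, hs⟩ := hg hgE
    have hcompl : Tendsto (fun r : ℝ => volume (Eᶜ ∩ ball g r) / volume (ball g r))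
        (𝓝[>] (0:ℝ)) (𝓝 0) :=
      density_zero_of_disjoint hE.compl (hgd hgE) one_pos (fun x hx _ hxP => hx hxP)
    set k := ⌈s⌉₊ with hk
    have hε0 : (0:ℝ≥0∞) < (4 * 2^n : ℝ≥0∞)⁻¹ := by
      rw [ENNReal.inv_pos]
      exact ENNReal.mul_ne_top (by norm_num) (ENNReal.pow_ne_top (by norm_num))
    have h1 := hs.eventually_lt_const hε0
    have h2 := hcompl.eventually_lt_const hε0
    obtain ⟨δ, hδmem, hδsub⟩ := mem_nhdsGT_iff_exists_Ioo_subset.1 (h1.and h2)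
    have hδ0 : (0:ℝ) < δ := hδmem
    obtain ⟨j, hj⟩ := exists_nat_one_div_lt hδ0
    have hGg : g ∈ Gset E f k j := by
      refine ⟨hgE, fun r hr0 hrj => ?_⟩
      have hrδ : r < δ := hrj.trans (by exact_mod_cast hj)
      obtain ⟨hb1, hb2⟩ := hδsub ⟨hr0, hrδ⟩
      have hball0 : volume (ball g r) ≠ 0 := (measure_ball_pos volume g hr0).ne'
      have hballt : volume (ball g r) ≠ ∞ := measure_ball_lt_top.ne
      constructor
      · have hmono : volume ({x ∈ E | (k:ℝ) < ‖f x - f g‖ / ‖x - g‖} ∩ ball g r)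
            ≤ volume ({x ∈ E | s < ‖f x - f g‖ / ‖x - g‖} ∩ ball g r) :=
          measure_mono (inter_subset_inter_left _
            (fun x hx => ⟨hx.1, lt_of_le_of_lt (Nat.le_ceil s) hx.2⟩))
        refine hmono.trans ?_
        have := (ENNReal.div_lt_iff (Or.inl hball0) (Or.inl hballt)).1 hb1
        exact this.le
      · have heq : ball g r \ E = Eᶜ ∩ ball g r := by
          rw [diff_eq_compl_inter]
        rw [heq]
        exact ((ENNReal.div_lt_iff (Or.inl hball0) (Or.inl hballt)).1 hb2).le
    obtain ⟨q, hqc, hq⟩ := hcdense.exists_dist_lt g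
      (show (0:ℝ) < 1/(4*((j:ℝ)+1)) by positivity)
    exact ⟨k, j, q, hqc, hGg, mem_ball.2 hq⟩
  -- the Lipschitz extensions of `f` from the pieces
  have hext : ∀ k j : ℕ, ∀ q : Euc n, ∃ F : Euc n → Euc m,
      EqOn f F (Gset E f k j ∩ ball q (1/(4*(j+1)))) ∧
        ∀ᵐ a ∂(volume : Measure (Euc n)), DifferentiableAt ℝ F a :=
    fun k j q => exists_extension f _ _ (lipschitz_on_piece E f k j q)
  choose F hFeq hFdiff using hext
  have hdiffall : ∀ᵐ a ∂(volume : Measure (Euc n)), ∀ k j : ℕ, ∀ q ∈ c,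
      DifferentiableAt ℝ (F k j q) a :=
    ae_all_iff.2 fun k => ae_all_iff.2 fun j => (ae_ball_iff hccount).2 fun q _ => hFdiff k j q
  have hdensall : ∀ᵐ a ∂(volume : Measure (Euc n)), ∀ k j : ℕ, ∀ q ∈ c,
      a ∈ Gset E f k j ∩ ball q (1/(4*(j+1))) →
      Tendsto (fun r : ℝ => volume ((Gset E f k j ∩ ball q (1/(4*(j+1)))) ∩ closedBall a r)
        / volume (closedBall a r)) (𝓝[>] (0:ℝ)) (𝓝 1) :=
    ae_all_iff.2 fun k => ae_all_iff.2 fun j => (ae_ball_iff hccount).2 fun q _ =>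
      ae_imp_of_restrict (Besicovitch.ae_tendsto_measure_inter_div volume _)
  filter_upwards [hcov, hdiffall, hdensall] with a hacov hadiff hadens haE
  obtain ⟨k, j, q, hqc, haP⟩ := hacov haE
  refine ⟨(fderiv ℝ (F k j q) a).toLinearMap, fun ε hε => ?_⟩
  set FF := F k j q with hFF
  set l := fderiv ℝ FF a with hl
  -- the exceptional set is measurable
  have hDmeas : MeasurableSet {x ∈ E | ε * ‖x - a‖ < ‖f x - f a - l (x - a)‖} := by
    have := measurable_D hE hf (fun x => f a + l (x - a))
      (continuous_const.add (l.continuous.comp (continuous_id.sub continuous_const))) ε a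
    convert this using 3 with x
    rw [sub_add_eq_sub_sub]
  -- the little-o estimate from differentiability
  have hder := (hadiff k j q hqc).hasFDerivAt
  have hlittle : ∀ᶠ x in 𝓝 a, ‖FF x - FF a - l (x - a)‖ ≤ ε * ‖x - a‖ := by
    have h := hder.isLittleO.def hε
    simpa using h
  obtain ⟨δ, hδ0, hδ⟩ := Metric.eventually_nhds_iff.1 hlittle
  have hdisj : ∀ x ∈ {x ∈ E | ε * ‖x - a‖ < ‖f x - f a - l (x - a)‖},
      x ∈ ball a δ → x ∉ Gset E f k j ∩ ball q (1/(4*(j+1))) := by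
    intro x hxD hxb hxG
    have h1 : f x = FF x := hFeq k j q hxG
    have h2 : f a = FF a := hFeq k j q haP
    have h3 : ‖FF x - FF a - l (x - a)‖ ≤ ε * ‖x - a‖ := hδ (mem_ball.1 hxb)
    obtain ⟨hxE, hxlt⟩ := hxD
    rw [h1, h2] at hxlt
    exact absurd hxlt (not_lt.2 h3)
  have hfinal := density_zero_of_disjoint hDmeas (hadens k j q hqc haP) hδ0 hdisj
  show Tendsto _ (𝓝[>] (0:ℝ)) (𝓝 0)
  exact hfinal
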